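/- The singular value function is submultiplicative: for all A, B ∈ ℝ^{d×d} and all s ≥ 0, φ^s(AB) ≤ φ^s(A)φ^s(B). -/

import Mathlib

open scoped BigOperators

noncomputable def svalList {n : Type*} [Fintype n] [DecidableEq n] (A : Matrix n n ℝ) : List ℝ :=
  ((Multiset.map (fun i => Real.sqrt ((Matrix.isHermitian_iff_isSymm.mpr (Matrix.isSymm_transpose_mul_self A)).eigenvalues i))
      Finset.univ.val).sort (· ≤ ·)).reverse

/-- `sval A j` is the `(j+1)`-th largest singular value `α_{j+1}(A)` (0-indexed). -/
noncomputable def sval {n : Type*} [Fintype n] [DecidableEq n] (A : Matrix n n ℝ) (j : ℕ) : ℝ :=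
  (svalList A).getD j 0

/-- The singular value function `φ^s` (with `φ^s(A) = |det A|^{s/d}` for `s > d`). -/
noncomputable def phi {d : ℕ} (s : ℝ) (A : Matrix (Fin d) (Fin d) ℝ) : ℝ :=
  if s ≤ d then
    (∏ i ∈ Finset.range ⌊s⌋₊, sval A i) *
      (if ⌊s⌋₊ < d then sval A ⌊s⌋₊ ^ (s - ⌊s⌋₊) else 1)
  else |A.det| ^ (s / (d : ℝ))

section CauchyBinet

open Matrix Finset Equiv

private lemma det_conj_diag_expand {d k : ℕ} (R : Matrix (Fin d) (Fin k) ℝ) (μ : Fin d → ℝ) :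
    (Rᵀ * Matrix.diagonal μ * R).det
      = ∑ f : Fin k → Fin d, (∏ j, μ (f j) * R (f j) j) * (R.submatrix f id).det := by
  have h1 : (Rᵀ * Matrix.diagonal μ * R).det
      = (Matrix.detRowAlternating (R := ℝ) (n := Fin k)).toMultilinearMap
          (fun j => ∑ i : Fin d, (μ i * R i j) • (R i)) := by
    have h2 : (Rᵀ * Matrix.diagonal μ * R : Matrix (Fin k) (Fin k) ℝ)
        = Matrix.of (fun j => ∑ i : Fin d, (μ i * R i j) • (R i)) := by
      ext j j'
      simp only [Matrix.mul_assoc, Matrix.mul_apply, Matrix.of_apply, Finset.sum_apply,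
        Pi.smul_apply, smul_eq_mul, Matrix.transpose_apply, Matrix.diagonal_apply, ite_mul,
        zero_mul, mul_ite, mul_zero, Finset.sum_ite_eq', Finset.mem_univ, if_true]
      exact Finset.sum_congr rfl fun i _ => by ring
    rw [h2]; rfl
  rw [h1, MultilinearMap.map_sum]
  refine Finset.sum_congr rfl fun f _ => ?_
  rw [(Matrix.detRowAlternating (R := ℝ) (n := Fin k)).toMultilinearMap.map_smul_univ
    (fun j => μ (f j) * R (f j) j) (fun j => R (f j)), smul_eq_mul]
  rfl

private lemma fiber_sum {d k : ℕ} (R : Matrix (Fin d) (Fin k) ℝ) (μ : Fin d → ℝ)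
    (S : Finset (Fin d)) (hS : S.card = k) :
    ∑ f ∈ (Finset.univ.filter (fun f : Fin k → Fin d => Function.Injective f)).filter
        (fun f => Finset.image f Finset.univ = S),
      (∏ j, μ (f j) * R (f j) j) * (R.submatrix f id).det
      = (∏ i ∈ S, μ i) *
          ((R.submatrix (fun j => (S.orderIsoOfFin hS j : Fin d)) id).det)^2 := by
  set e := S.orderIsoOfFin hS with he
  set M : Matrix (Fin k) (Fin k) ℝ := R.submatrix (fun j => (e j : Fin d)) id with hM
  have key : ∑ f ∈ (Finset.univ.filter (fun f : Fin k → Fin d => Function.Injective f)).filter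
        (fun f => Finset.image f Finset.univ = S),
      (∏ j, μ (f j) * R (f j) j) * (R.submatrix f id).det
      = ∑ π : Perm (Fin k),
          (∏ j, μ ((e (π j) : Fin d)) * R ((e (π j) : Fin d)) j) *
            (R.submatrix (fun j => ((e (π j) : Fin d))) id).det := by
    refine (Finset.sum_bij' (fun (π : Perm (Fin k)) _ => fun j => (e (π j) : Fin d))
      (fun f hf => ?_) ?_ ?_ ?_ ?_ ?_).symm
    · -- inverse map: from f in fiber to a permutation
      have hf' := Finset.mem_filter.mp hf
      have hinj : Function.Injective f := (Finset.mem_filter.mp hf'.1).2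
      have himg : Finset.image f Finset.univ = S := hf'.2
      exact Equiv.ofBijective (fun x => e.symm ⟨f x, by
          rw [← himg]; exact Finset.mem_image_of_mem f (Finset.mem_univ x)⟩)
        (Finite.injective_iff_bijective.mp (fun a b hab => by
          apply hinj
          have := congrArg (fun z => ((e z : S) : Fin d)) hab
          simpa using this))
    · intro π _
      refine Finset.mem_filter.mpr ⟨Finset.mem_filter.mpr ⟨Finset.mem_univ _, ?_⟩, ?_⟩
      · intro a b hab
        have : e (π a) = e (π b) := Subtype.ext hab
        exact π.injective (e.injective this)
      · apply Finset.eq_of_subset_of_card_le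
        · intro x hx
          rcases Finset.mem_image.mp hx with ⟨j, _, rfl⟩
          exact (e (π j)).2
        · rw [hS, Finset.card_image_of_injective _ (fun a b hab => by
            exact π.injective (e.injective (Subtype.ext hab)))]
          simp
    · intro f hf; exact Finset.mem_univ _
    · intro π _
      ext x
      simp
    · intro f hf
      funext x
      simp
    · intro π _; rfl
  rw [key]
  have hdet : ∀ π : Perm (Fin k),
      (R.submatrix (fun j => ((e (π j) : Fin d))) id).det = (Perm.sign π : ℤ) * M.det := by
    intro π
    have : R.submatrix (fun j => ((e (π j) : Fin d))) id = M.submatrix π id := rfl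
    rw [this, Matrix.det_permute]
  have hprod : ∀ π : Perm (Fin k),
      (∏ j, μ ((e (π j) : Fin d)) * R ((e (π j) : Fin d)) j)
        = (∏ i ∈ S, μ i) * ∏ j, M (π j) j := by
    intro π
    rw [Finset.prod_mul_distrib]
    congr 1
    have h1 : ∏ j, μ ((e (π j) : Fin d)) = ∏ j, μ ((e j : Fin d)) :=
      Equiv.prod_comp π (fun j => μ ((e j : Fin d)))
    rw [h1, ← Finset.prod_coe_sort S μ]
    exact Equiv.prod_comp e.toEquiv (fun x : S => μ (x : Fin d))
  calc ∑ π : Perm (Fin k),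
          (∏ j, μ ((e (π j) : Fin d)) * R ((e (π j) : Fin d)) j) *
            (R.submatrix (fun j => ((e (π j) : Fin d))) id).det
      = (∏ i ∈ S, μ i) * M.det * ∑ π : Perm (Fin k),
          ((Perm.sign π : ℤ) : ℝ) * ∏ j, M (π j) j := by
        rw [Finset.mul_sum]
        refine Finset.sum_congr rfl fun π _ => ?_
        rw [hdet π, hprod π]; ring
      _ = (∏ i ∈ S, μ i) * M.det ^ 2 := by
        rw [← Matrix.det_apply']
        ring

private noncomputable def subdet {d k : ℕ} (R : Matrix (Fin d) (Fin k) ℝ) (S : Finset (Fin d)) : ℝ :=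
  if h : S.card = k then (R.submatrix (fun j => (S.orderIsoOfFin h j : Fin d)) id).det else 0

private lemma cauchy_binet {d k : ℕ} (R : Matrix (Fin d) (Fin k) ℝ) (μ : Fin d → ℝ) :
    (Rᵀ * Matrix.diagonal μ * R).det
      = ∑ S ∈ Finset.powersetCard k Finset.univ, (∏ i ∈ S, μ i) * (subdet R S)^2 := by
  rw [det_conj_diag_expand]
  have h2 : ∑ f ∈ Finset.univ.filter (fun f : Fin k → Fin d => Function.Injective f),
      (∏ j, μ (f j) * R (f j) j) * (R.submatrix f id).det
      = ∑ f : Fin k → Fin d, (∏ j, μ (f j) * R (f j) j) * (R.submatrix f id).det := by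
    apply Finset.sum_filter_of_ne
    intro f _ hne
    by_contra hinj
    rcases Function.not_injective_iff.mp hinj with ⟨a, b, hab, hne'⟩
    exact hne (by rw [Matrix.det_zero_of_row_eq hne' (funext fun j' => by
      show R (f a) j' = R (f b) j'
      rw [hab]), mul_zero])
  rw [← h2]
  rw [← Finset.sum_fiberwise_of_maps_to (g := fun f => Finset.image f Finset.univ)
    (t := Finset.powersetCard k Finset.univ) (fun f hf => by
      rw [Finset.mem_powersetCard_univ, Finset.card_image_of_injective _
        (Finset.mem_filter.mp hf).2]
      simp)]
  refine Finset.sum_congr rfl fun S hS => ?_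
  have hSc : S.card = k := (Finset.mem_powersetCard_univ.mp hS).symm ▸ rfl
  rw [fiber_sum R μ S hSc, subdet, dif_pos hSc]

private lemma det_conj_diag_le {d k : ℕ} (R : Matrix (Fin d) (Fin k) ℝ) (μ : Fin d → ℝ)
    (hR : Rᵀ * R = 1) {c : ℝ}
    (hc : ∀ S : Finset (Fin d), S.card = k → ∏ i ∈ S, μ i ≤ c) :
    (Rᵀ * Matrix.diagonal μ * R).det ≤ c := by
  have h1 : ∑ S ∈ Finset.powersetCard k Finset.univ, (subdet R S)^2 = 1 := by
    have h := cauchy_binet R (fun _ => 1)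
    rw [Matrix.diagonal_one, Matrix.mul_one, hR, Matrix.det_one] at h
    simpa using h.symm
  rw [cauchy_binet]
  calc ∑ S ∈ Finset.powersetCard k Finset.univ, (∏ i ∈ S, μ i) * (subdet R S)^2
      ≤ ∑ S ∈ Finset.powersetCard k Finset.univ, c * (subdet R S)^2 := by
        refine Finset.sum_le_sum fun S hS => ?_
        exact mul_le_mul_of_nonneg_right (hc S (Finset.mem_powersetCard_univ.mp hS))
          (sq_nonneg _)
    _ = c := by rw [← Finset.mul_sum, h1, mul_one]

end CauchyBinet

namespace SvalAux

open Matrix Finset Equiv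

variable {d : ℕ} (A : Matrix (Fin d) (Fin d) ℝ)

noncomputable def ev : Fin d → ℝ := (Matrix.isHermitian_iff_isSymm.mpr (Matrix.isSymm_transpose_mul_self A)).eigenvalues

noncomputable def sv : Fin d → ℝ := fun i => Real.sqrt (ev A i)

/-- permutation so that `sv ∘ tau` enumerates singular values in decreasing order -/
noncomputable def tau : Equiv.Perm (Fin d) := (Fin.revPerm).trans (Tuple.sort (sv A))

lemma conjT_eq {m n : Type*} (B : Matrix m n ℝ) : Bᴴ = Bᵀ := by
  ext i j; simp [Matrix.conjTranspose_apply]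

lemma psd : (Aᵀ * A).PosSemidef := by
  have h0 := Matrix.posSemidef_conjTranspose_mul_self A
  rwa [conjT_eq] at h0

lemma ev_nonneg (i : Fin d) : 0 ≤ ev A i :=
  (psd A).eigenvalues_nonneg i

lemma svalList_eq : svalList A = (List.ofFn (fun i => sv A (Tuple.sort (sv A) i))).reverse := by
  unfold svalList
  congr 1
  apply List.Perm.eq_of_pairwise' (r := (· ≤ ·))
  rotate_left 2
  · rw [← Multiset.coe_eq_coe, Multiset.sort_eq, ← Fin.univ_val_map,
      show (fun i => sv A (Tuple.sort (sv A) i)) = (sv A) ∘ (Tuple.sort (sv A)) from rfl,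
      ← Multiset.map_map, Multiset.map_univ_val_equiv]
    rfl
  · exact Multiset.pairwise_sort _ _
  · exact List.pairwise_ofFn.mpr fun i j h => Tuple.monotone_sort (sv A) h.le

lemma length_svalList : (svalList A).length = d := by
  rw [svalList_eq, List.length_reverse, List.length_ofFn]

lemma sval_eq (j : Fin d) : sval A (j : ℕ) = sv A (tau A j) := by
  have hlen : (j : ℕ) < ((List.ofFn (fun i => sv A (Tuple.sort (sv A) i))).reverse).length := by
    simpa using j.2
  rw [sval, svalList_eq, List.getD_eq_getElem _ _ hlen, List.getElem_reverse,
    List.getElem_ofFn]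
  show sv A (Tuple.sort (sv A) _) = sv A (Tuple.sort (sv A) (Fin.rev j))
  congr 2
  apply Fin.ext
  have hj := j.2
  simp [Fin.rev]
  omega

lemma sval_zero_of_ge (j : ℕ) (hj : d ≤ j) : sval A j = 0 := by
  rw [sval]
  apply List.getD_eq_default
  rw [length_svalList]; exact hj

lemma sval_nonneg (j : ℕ) : 0 ≤ sval A j := by
  rcases lt_or_ge j d with hj | hj
  · rw [show j = ((⟨j, hj⟩ : Fin d) : ℕ) from rfl, sval_eq]
    exact Real.sqrt_nonneg _
  · rw [sval_zero_of_ge A j hj]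

lemma sval_sq (j : Fin d) : (sval A (j : ℕ))^2 = ev A (tau A j) := by
  rw [sval_eq]
  exact Real.sq_sqrt (ev_nonneg A _)

lemma sv_tau_antitone : Antitone (fun j => sv A (tau A j)) := by
  intro a b hab
  exact Tuple.monotone_sort (sv A) (by
    show Fin.rev b ≤ Fin.rev a
    exact Fin.rev_le_rev.mpr hab)

lemma ev_tau_antitone : Antitone (fun j => ev A (tau A j)) := by
  intro a b hab
  have h := sv_tau_antitone A hab
  dsimp only at h ⊢
  rw [← Real.sq_sqrt (ev_nonneg A (tau A b)), ← Real.sq_sqrt (ev_nonneg A (tau A a))]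
  exact pow_le_pow_left₀ (Real.sqrt_nonneg _) h 2

noncomputable def Pk (k : ℕ) : ℝ := ∏ j ∈ Finset.range k, sval A j

lemma Pk_nonneg (k : ℕ) : 0 ≤ Pk A k :=
  Finset.prod_nonneg (fun j _ => sval_nonneg A j)

lemma fin_le_strictMono {k : ℕ} {f : Fin k → ℕ} (hf : StrictMono f) (j : Fin k) :
    (j : ℕ) ≤ f j := by
  have key : ∀ m (h : m < k), m ≤ f ⟨m, h⟩ := by
    intro m
    induction m with
    | zero => intro h; exact Nat.zero_le _
    | succ m ih =>
      intro h
      have h1 : m < k := Nat.lt_of_succ_lt h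
      have h2 := ih h1
      have h3 : f ⟨m, h1⟩ < f ⟨m + 1, h⟩ := hf (by simp [Fin.lt_def])
      omega
  simpa using key j j.2

lemma prod_ev_subset_le (S : Finset (Fin d)) :
    ∏ i ∈ S, ev A i ≤ (Pk A S.card)^2 := by
  classical
  set k := S.card with hk
  set T : Finset (Fin d) := S.image (tau A).symm with hT
  have hTcard : T.card = k := Finset.card_image_of_injective _ (tau A).symm.injective
  have himg : T.image (tau A) = S := by
    rw [hT, Finset.image_image]
    simpa using Finset.image_id
  have h1 : ∏ i ∈ S, ev A i = ∏ x ∈ T, ev A (tau A x) := by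
    conv_lhs => rw [← himg]
    exact Finset.prod_image (fun a _ b _ h => (tau A).injective h)
  set e := T.orderIsoOfFin hTcard with he
  have hmono : StrictMono (fun j : Fin k => ((e j : Fin d) : ℕ)) := by
    intro a b hab
    exact Fin.val_strictMono (show (e a : Fin d) < (e b : Fin d) from e.strictMono hab)
  have hle : ∀ j : Fin k, (j : ℕ) ≤ ((e j : Fin d) : ℕ) := fin_le_strictMono hmono
  have h2 : ∏ x ∈ T, ev A (tau A x) = ∏ j : Fin k, ev A (tau A (e j)) := by
    rw [← Finset.prod_coe_sort]
    exact (Equiv.prod_comp e.toEquiv (fun x : T => ev A (tau A x))).symm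
  have h3 : ∏ j : Fin k, ev A (tau A (e j))
      ≤ ∏ j : Fin k, ev A (tau A ⟨(j : ℕ), lt_of_le_of_lt (hle j) (Fin.is_lt _)⟩) := by
    refine Finset.prod_le_prod (fun j _ => ev_nonneg A _) (fun j _ => ?_)
    exact ev_tau_antitone A (show (⟨(j : ℕ), _⟩ : Fin d) ≤ (e j : Fin d) from hle j)
  have h4 : ∏ j : Fin k, ev A (tau A ⟨(j : ℕ), lt_of_le_of_lt (hle j) (Fin.is_lt _)⟩)
      = (Pk A k)^2 := by
    have : ∀ j : Fin k, ev A (tau A ⟨(j : ℕ), lt_of_le_of_lt (hle j) (Fin.is_lt _)⟩)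
        = (sval A (j : ℕ))^2 := fun j => (sval_sq A _).symm
    rw [Finset.prod_congr rfl (fun j _ => this j)]
    rw [Pk, ← Finset.prod_pow]
    exact Fin.prod_univ_eq_prod_range (fun n => (sval A n)^2) k
  rw [h1, h2]
  exact le_trans h3 (le_of_eq h4)

noncomputable def U : Matrix (Fin d) (Fin d) ℝ :=
  ((Matrix.isHermitian_iff_isSymm.mpr (Matrix.isSymm_transpose_mul_self A)).eigenvectorUnitary : Matrix (Fin d) (Fin d) ℝ)

lemma U_mul_Ut : U A * (U A)ᵀ = 1 := by
  have h := (Matrix.isHermitian_iff_isSymm.mpr (Matrix.isSymm_transpose_mul_self A)).eigenvectorUnitary.2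
  rw [Unitary.mem_iff] at h
  have := h.2
  simp only [Matrix.star_eq_conjTranspose, conjT_eq] at this; exact this

lemma Ut_mul_U : (U A)ᵀ * U A = 1 := by
  have h := (Matrix.isHermitian_iff_isSymm.mpr (Matrix.isSymm_transpose_mul_self A)).eigenvectorUnitary.2
  rw [Unitary.mem_iff] at h
  have := h.1
  simp only [Matrix.star_eq_conjTranspose, conjT_eq] at this; exact this

lemma spectral : Aᵀ * A = U A * Matrix.diagonal (ev A) * (U A)ᵀ := by
  have h := (Matrix.isHermitian_iff_isSymm.mpr (Matrix.isSymm_transpose_mul_self A)).spectral_theorem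
  simp only [Matrix.star_eq_conjTranspose, conjT_eq, RCLike.ofReal_real_eq_id,
    Function.id_comp] at h
  exact h

lemma det_conj_le_Pk {k : ℕ} (P : Matrix (Fin d) (Fin k) ℝ) (hP : Pᵀ * P = 1) :
    (Pᵀ * (Aᵀ * A) * P).det ≤ (Pk A k)^2 := by
  set R := (U A)ᵀ * P with hR
  have hRt : Rᵀ = Pᵀ * U A := by
    rw [hR, Matrix.transpose_mul, Matrix.transpose_transpose]
  have hRR : Rᵀ * R = 1 := by
    rw [hRt, hR, Matrix.mul_assoc, ← Matrix.mul_assoc (U A), U_mul_Ut, Matrix.one_mul, hP]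
  have hconv : Pᵀ * (Aᵀ * A) * P = Rᵀ * Matrix.diagonal (ev A) * R := by
    rw [spectral A, hRt, hR]
    simp only [Matrix.mul_assoc]
  rw [hconv]
  exact det_conj_diag_le R (ev A) hRR (fun S hS => by
    have := prod_ev_subset_le A S
    rwa [hS] at this)

lemma exists_P {k : ℕ} (hk : k ≤ d) :
    ∃ P : Matrix (Fin d) (Fin k) ℝ, Pᵀ * P = 1 ∧
      (Pᵀ * (Aᵀ * A) * P).det = (Pk A k)^2 := by
  classical
  set e : Fin k → Fin d := fun j => tau A (Fin.castLE hk j) with he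
  have hinj : Function.Injective e := fun a b hab => by
    have := (tau A).injective hab
    exact Fin.castLE_injective hk this
  refine ⟨(U A).submatrix id e, ?_, ?_⟩
  · have h1 : ((U A).submatrix id e)ᵀ * (U A).submatrix id e
        = ((U A)ᵀ * U A).submatrix e e := by
      ext i j
      simp [Matrix.mul_apply, Matrix.transpose_apply]
    rw [h1, Ut_mul_U]
    ext i j
    simp [Matrix.one_apply, hinj.eq_iff]
  · have h1 : ((U A).submatrix id e)ᵀ * (Aᵀ * A) * (U A).submatrix id e
        = ((U A)ᵀ * (Aᵀ * A) * U A).submatrix e e := by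
      ext i j
      simp [Matrix.mul_apply, Matrix.transpose_apply, Finset.sum_mul, Finset.mul_sum]
    rw [h1]
    have h2 : (U A)ᵀ * (Aᵀ * A) * U A = Matrix.diagonal (ev A) := by
      rw [spectral]
      calc (U A)ᵀ * (U A * Matrix.diagonal (ev A) * (U A)ᵀ) * U A
          = ((U A)ᵀ * U A) * Matrix.diagonal (ev A) * ((U A)ᵀ * U A) := by
            simp only [Matrix.mul_assoc]
        _ = Matrix.diagonal (ev A) := by rw [Ut_mul_U]; simp
    rw [h2]
    have h3 : (Matrix.diagonal (ev A)).submatrix e e = Matrix.diagonal (fun j => ev A (e j)) := by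
      ext i j
      by_cases hij : i = j
      · subst hij; simp
      · simp [Matrix.submatrix_apply, Matrix.diagonal_apply, hij, hinj.ne hij]
    rw [h3, Matrix.det_diagonal]
    have h4 : ∀ j : Fin k, ev A (e j) = (sval A (j : ℕ))^2 := by
      intro j
      rw [he]
      have := sval_sq A (Fin.castLE hk j)
      simpa using this.symm
    rw [Finset.prod_congr rfl (fun j _ => h4 j), Pk, ← Finset.prod_pow]
    exact Fin.prod_univ_eq_prod_range (fun n => (sval A n)^2) k

open scoped MatrixOrder in
theorem Pk_submul (B : Matrix (Fin d) (Fin d) ℝ) (k : ℕ) :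
    Pk (A * B) k ≤ Pk A k * Pk B k := by
  rcases le_or_gt k d with hk | hk
  · obtain ⟨P, hP1, hP2⟩ := exists_P (A * B) hk
    have hG : (A * B)ᵀ * (A * B) = Bᵀ * (Aᵀ * A) * B := by
      rw [Matrix.transpose_mul]
      simp only [Matrix.mul_assoc]
    set M : Matrix (Fin d) (Fin k) ℝ := B * P with hM
    have hMt : Mᵀ = Pᵀ * Bᵀ := by rw [hM, Matrix.transpose_mul]
    have hX : Pᵀ * ((A * B)ᵀ * (A * B)) * P = Mᵀ * (Aᵀ * A) * M := by
      rw [hG, hMt, hM]; simp only [Matrix.mul_assoc]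
    have hsq : (Pk (A * B) k)^2 = (Mᵀ * (Aᵀ * A) * M).det := by
      rw [← hP2, hX]
    set N : Matrix (Fin k) (Fin k) ℝ := Mᵀ * M with hN
    have hNpsd : N.PosSemidef := by
      have h0 := Matrix.posSemidef_conjTranspose_mul_self M
      rwa [conjT_eq] at h0
    have hNB : N.det ≤ (Pk B k)^2 := by
      have : N = Pᵀ * (Bᵀ * B) * P := by
        rw [hN, hMt, hM]; simp only [Matrix.mul_assoc]
      rw [this]
      exact det_conj_le_Pk B P hP1
    by_cases hdN : N.det = 0
    · have hex : ∃ v ≠ 0, N.mulVec v = 0 := (Matrix.exists_mulVec_eq_zero_iff).mpr hdN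
      obtain ⟨v, hv0, hv⟩ := hex
      have hMv : M.mulVec v = 0 := by
        have h1 : (M.mulVec v) ⬝ᵥ (M.mulVec v) = 0 := by
          have h2 : v ⬝ᵥ (N.mulVec v) = 0 := by rw [hv]; simp
          rwa [hN, ← Matrix.mulVec_mulVec, Matrix.dotProduct_mulVec,
            Matrix.vecMul_transpose] at h2
        exact dotProduct_self_eq_zero.mp h1
      have hzero : (Mᵀ * (Aᵀ * A) * M).det = 0 := by
        apply (Matrix.exists_mulVec_eq_zero_iff).mp
        refine ⟨v, hv0, ?_⟩
        rw [← Matrix.mulVec_mulVec, ← Matrix.mulVec_mulVec, hMv]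
        simp
      have hz2 : (Pk (A * B) k)^2 = 0 := by rw [hsq, hzero]
      have hPk0 : Pk (A * B) k = 0 := (pow_eq_zero_iff two_ne_zero).mp hz2
      rw [hPk0]
      exact mul_nonneg (Pk_nonneg A k) (Pk_nonneg B k)
    · set S : Matrix (Fin k) (Fin k) ℝ := CFC.sqrt N with hS
      have hSS : S * S = N := CFC.sqrt_mul_sqrt_self N hNpsd.nonneg
      have hSsym : Sᵀ = S := by
        have := (Matrix.nonneg_iff_posSemidef.mp (CFC.sqrt_nonneg N)).1
        rwa [Matrix.IsHermitian, conjT_eq] at this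
      have hSdet : S.det * S.det = N.det := by rw [← Matrix.det_mul, hSS]
      have hSd0 : S.det ≠ 0 := fun h => hdN (by rw [← hSdet, h, mul_zero])
      have hSunit : IsUnit S.det := isUnit_iff_ne_zero.mpr hSd0
      set C : Matrix (Fin k) (Fin k) ℝ := S⁻¹ with hC
      have hSC : S * C = 1 := Matrix.mul_nonsing_inv S hSunit
      have hCS : C * S = 1 := Matrix.nonsing_inv_mul S hSunit
      have hCt : Cᵀ = C := by rw [hC, Matrix.transpose_nonsing_inv, hSsym]
      set Q : Matrix (Fin d) (Fin k) ℝ := M * C with hQ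
      have hQt : Qᵀ = Cᵀ * Mᵀ := by rw [hQ, Matrix.transpose_mul]
      have hQQ : Qᵀ * Q = 1 := by
        rw [hQt, hCt, hQ]
        calc C * Mᵀ * (M * C) = C * (Mᵀ * M) * C := by simp only [Matrix.mul_assoc]
          _ = C * (S * S) * C := by rw [hSS, hN]
          _ = (C * S) * (S * C) := by simp only [Matrix.mul_assoc]
          _ = 1 := by rw [hCS, hSC, one_mul]
      have hQle := det_conj_le_Pk A Q hQQ
      have hQdet : (Qᵀ * (Aᵀ * A) * Q).det = (Mᵀ * (Aᵀ * A) * M).det * (C.det)^2 := by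
        rw [hQt, hCt, hQ]
        have : C * Mᵀ * (Aᵀ * A) * (M * C) = C * (Mᵀ * (Aᵀ * A) * M) * C := by
          simp only [Matrix.mul_assoc]
        rw [this, Matrix.det_mul, Matrix.det_mul]
        ring
      have hCdet : C.det ^ 2 * N.det = 1 := by
        rw [hC, Matrix.det_nonsing_inv, Ring.inverse_eq_inv']
        field_simp [← hSdet]
        rw [← hSdet]; ring
      have hNdet_pos : 0 < N.det := by rw [← hSdet]; exact mul_self_pos.mpr hSd0
      have key : (Pk (A * B) k)^2 ≤ (Pk A k)^2 * (Pk B k)^2 := by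
        have h1 : (Mᵀ * (Aᵀ * A) * M).det = (Qᵀ * (Aᵀ * A) * Q).det * N.det := by
          rw [hQdet, mul_assoc, hCdet, mul_one]
        calc (Pk (A * B) k)^2 = (Mᵀ * (Aᵀ * A) * M).det := hsq
          _ = (Qᵀ * (Aᵀ * A) * Q).det * N.det := h1
          _ ≤ (Pk A k)^2 * N.det := by
              exact mul_le_mul_of_nonneg_right hQle (le_of_lt hNdet_pos)
          _ ≤ (Pk A k)^2 * (Pk B k)^2 := by
              exact mul_le_mul_of_nonneg_left hNB (sq_nonneg _)
      nlinarith [Pk_nonneg (A * B) k, Pk_nonneg A k, Pk_nonneg B k, key,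
        mul_nonneg (Pk_nonneg A k) (Pk_nonneg B k)]
  · have hz : ∀ X : Matrix (Fin d) (Fin d) ℝ, Pk X k = 0 := by
      intro X
      apply Finset.prod_eq_zero (Finset.mem_range.mpr hk)
      exact sval_zero_of_ge X d le_rfl
    rw [hz, hz, hz]
    simp

end SvalAux

private lemma interp_aux {θ x a : ℝ} (hx : 0 ≤ x) (ha : 0 ≤ a) (hθ1 : θ < 1) :
    x * a ^ θ = x ^ (1 - θ) * (x * a) ^ θ := by
  rcases eq_or_lt_of_le hx with h | h
  · rw [← h, Real.zero_rpow (by linarith : (1:ℝ) - θ ≠ 0), zero_mul, zero_mul]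
  · rw [Real.mul_rpow hx ha, ← mul_assoc, ← Real.rpow_add h, sub_add_cancel, Real.rpow_one]

private lemma interp_le {θ x a p c : ℝ} (hx : 0 ≤ x) (ha : 0 ≤ a) (hp : 0 ≤ p) (hc : 0 ≤ c)
    (hθ0 : 0 ≤ θ) (hθ1 : θ < 1) (h1 : x ≤ p) (h2 : x * a ≤ p * c) :
    x * a ^ θ ≤ p * c ^ θ := by
  rw [interp_aux hx ha hθ1, interp_aux hp hc hθ1]
  refine mul_le_mul (Real.rpow_le_rpow hx h1 (by linarith))
    (Real.rpow_le_rpow (mul_nonneg hx ha) h2 hθ0) (Real.rpow_nonneg (mul_nonneg hx ha) θ)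
    (Real.rpow_nonneg hp _)

/-- The singular value function is submultiplicative:
`φ^s(AB) ≤ φ^s(A)·φ^s(B)` for all `s ≥ 0`. -/
theorem phi_submultiplicative {d : ℕ} (s : ℝ) (hs : 0 ≤ s)
    (A B : Matrix (Fin d) (Fin d) ℝ) :
    phi s (A * B) ≤ phi s A * phi s B := by
  unfold phi
  by_cases hsd : s ≤ (d : ℝ)
  · rw [if_pos hsd, if_pos hsd, if_pos hsd]
    set m := ⌊s⌋₊ with hm
    have hprodAB := SvalAux.Pk_submul A B m
    by_cases hmd : m < d
    · rw [if_pos hmd, if_pos hmd, if_pos hmd]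
      have hθ0 : 0 ≤ s - (m : ℝ) := by
        have := Nat.floor_le hs
        rw [← hm] at this
        linarith
      have hθ1 : s - (m : ℝ) < 1 := by
        have := Nat.lt_floor_add_one s
        rw [← hm] at this
        linarith
      have hsucc := SvalAux.Pk_submul A B (m + 1)
      rw [SvalAux.Pk, SvalAux.Pk, SvalAux.Pk, Finset.prod_range_succ, Finset.prod_range_succ,
        Finset.prod_range_succ] at hsucc
      have hle := interp_le (SvalAux.Pk_nonneg (A * B) m) (SvalAux.sval_nonneg (A * B) m)
        (mul_nonneg (SvalAux.Pk_nonneg A m) (SvalAux.Pk_nonneg B m))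
        (mul_nonneg (SvalAux.sval_nonneg A m) (SvalAux.sval_nonneg B m))
        hθ0 hθ1 hprodAB (by
          calc SvalAux.Pk (A * B) m * sval (A * B) m
              ≤ SvalAux.Pk A m * sval A m * (SvalAux.Pk B m * sval B m) := hsucc
            _ = SvalAux.Pk A m * SvalAux.Pk B m * (sval A m * sval B m) := by ring
          )
      calc (∏ i ∈ Finset.range m, sval (A * B) i) * sval (A * B) m ^ (s - (m:ℝ))
          ≤ SvalAux.Pk A m * SvalAux.Pk B m * (sval A m * sval B m) ^ (s - (m:ℝ)) := hle
        _ = (∏ i ∈ Finset.range m, sval A i) * sval A m ^ (s - (m:ℝ)) *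
              ((∏ i ∈ Finset.range m, sval B i) * sval B m ^ (s - (m:ℝ))) := by
            rw [Real.mul_rpow (SvalAux.sval_nonneg A m) (SvalAux.sval_nonneg B m)]
            rw [SvalAux.Pk, SvalAux.Pk]
            ring
    · rw [if_neg hmd, if_neg hmd, if_neg hmd, mul_one, mul_one, mul_one]
      exact hprodAB
  · rw [if_neg hsd, if_neg hsd, if_neg hsd]
    have hdet : |(A * B).det| = |A.det| * |B.det| := by
      rw [Matrix.det_mul, abs_mul]
    rw [hdet, Real.mul_rpow (abs_nonneg _) (abs_nonneg _)]
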